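/- For every real number ε > 0 and every positive integer m, there exist positive integers p and q with p < q < (1+ε)·p such that every strictly isomorphic rectangle partition pair for (p,q) has size greater than m. -/

import Mathlib

open scoped Classical

/-- An axis-parallel rectangle in the plane, given by its coordinates. -/
structure Rect where
  x1 : ℝ
  x2 : ℝ
  y1 : ℝ
  y2 : ℝ

namespace Rect

/-- The horizontal side length. -/
def width (r : Rect) : ℝ := r.x2 - r.x1

/-- The vertical side length. -/
def height (r : Rect) : ℝ := r.y2 - r.y1

/-- The closed rectangle as a set of points. -/
def carrier (r : Rect) : Set (ℝ × ℝ) := Set.Icc r.x1 r.x2 ×ˢ Set.Icc r.y1 r.y2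

/-- The interior of the rectangle. -/
def inner (r : Rect) : Set (ℝ × ℝ) := Set.Ioo r.x1 r.x2 ×ˢ Set.Ioo r.y1 r.y2

/-- The rectangle is nondegenerate. -/
def Nondeg (r : Rect) : Prop := r.x1 < r.x2 ∧ r.y1 < r.y2

end Rect

/-- `P` is a rectangle partition of `[0, W] × [0, H]`: finitely many nondegenerate
rectangles with pairwise disjoint interiors whose union is `[0, W] × [0, H]`. -/
def IsRectPartition {k : ℕ} (W H : ℝ) (P : Fin k → Rect) : Prop :=
  (∀ i, (P i).Nondeg) ∧
  (∀ i j : Fin k, i ≠ j → (P i).inner ∩ (P j).inner = ∅) ∧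
  (⋃ i, (P i).carrier) = Set.Icc (0 : ℝ) W ×ˢ Set.Icc (0 : ℝ) H

/-- `P1`, `P2`, `σ` form a strictly isomorphic rectangle partition pair between the
rectangles `a × b` and `c × d`: matched modules have equal width and equal height. -/
def IsStrictIsoPair (a b c d : ℝ) {k : ℕ} (P1 P2 : Fin k → Rect)
    (σ : Equiv.Perm (Fin k)) : Prop :=
  IsRectPartition a b P1 ∧ IsRectPartition c d P2 ∧
  ∀ i, (P1 i).width = (P2 (σ i)).width ∧ (P1 i).height = (P2 (σ i)).height

/-- There is a strictly isomorphic rectangle partition pair between `a × b` and `c × d`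
of size `k`. -/
def StrictPairGen (a b c d : ℝ) (k : ℕ) : Prop :=
  ∃ (P1 P2 : Fin k → Rect) (σ : Equiv.Perm (Fin k)), IsStrictIsoPair a b c d P1 P2 σ

/-- A strictly isomorphic rectangle partition pair for `(p, q)` of size `k`:
partitions of `[0,p] × [0,q]` and `[0,q] × [0,p]` with a matching preserving
widths and heights. -/
def StrictPair (p q : ℝ) (k : ℕ) : Prop := StrictPairGen p q q p k

/-- An isomorphic rectangle partition pair (rotation allowed) between `a × b` and
`c × d` of size `k`: matched modules have the same unordered pair of side lengths. -/
def IsoPairRot (a b c d : ℝ) (k : ℕ) : Prop :=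
  ∃ (P1 P2 : Fin k → Rect) (σ : Equiv.Perm (Fin k)),
    IsRectPartition a b P1 ∧ IsRectPartition c d P2 ∧
    ∀ i, ((P1 i).width = (P2 (σ i)).width ∧ (P1 i).height = (P2 (σ i)).height) ∨
         ((P1 i).width = (P2 (σ i)).height ∧ (P1 i).height = (P2 (σ i)).width)

/-- A slat rectangle partition: if horizontal sides of two modules lie on the same
horizontal line and overlap in more than one point, they are identical segments. -/
def IsSlat {k : ℕ} (P : Fin k → Rect) : Prop :=
  ∀ i j : Fin k, ∀ yi ∈ ({(P i).y1, (P i).y2} : Set ℝ),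
    ∀ yj ∈ ({(P j).y1, (P j).y2} : Set ℝ), yi = yj →
      max (P i).x1 (P j).x1 < min (P i).x2 (P j).x2 →
      (P i).x1 = (P j).x1 ∧ (P i).x2 = (P j).x2

open MeasureTheory Set

namespace SIRTP

noncomputable def cutF {k : ℕ} (P : Fin k → Rect) : Finset ℝ :=
  (Finset.univ.image fun i => (P i).x1) ∪ (Finset.univ.image fun i => (P i).x2)

lemma x1_mem_cutF {k : ℕ} (P : Fin k → Rect) (i : Fin k) : (P i).x1 ∈ cutF P := by
  classical
  refine Finset.mem_union_left _ (Finset.mem_image_of_mem _ (Finset.mem_univ i))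

lemma x2_mem_cutF {k : ℕ} (P : Fin k → Rect) (i : Fin k) : (P i).x2 ∈ cutF P := by
  classical
  refine Finset.mem_union_right _ (Finset.mem_image_of_mem _ (Finset.mem_univ i))

lemma cutF_card_le {k : ℕ} (P : Fin k → Rect) : (cutF P).card ≤ 2 * k := by
  classical
  calc (cutF P).card ≤ _ + _ := Finset.card_union_le _ _
  _ ≤ 2 * k := by
      have h1 := Finset.card_image_le (s := (Finset.univ : Finset (Fin k))) (f := fun i => (P i).x1)
      have h2 := Finset.card_image_le (s := (Finset.univ : Finset (Fin k))) (f := fun i => (P i).x2)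
      simp at h1 h2; omega

section
variable {k : ℕ} {W H : ℝ} {P : Fin k → Rect}

lemma carrier_subset (hp : IsRectPartition W H P) (i : Fin k) :
    (P i).carrier ⊆ Set.Icc (0:ℝ) W ×ˢ Set.Icc (0:ℝ) H := by
  rw [← hp.2.2]; exact Set.subset_iUnion (fun i => (P i).carrier) i

lemma corner_mem (hp : IsRectPartition W H P) (i : Fin k) :
    ((P i).x1, (P i).y1) ∈ (P i).carrier := by
  have h := hp.1 i
  exact ⟨⟨le_refl _, h.1.le⟩, ⟨le_refl _, h.2.le⟩⟩

lemma corner_mem' (hp : IsRectPartition W H P) (i : Fin k) :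
    ((P i).x2, (P i).y1) ∈ (P i).carrier := by
  have h := hp.1 i
  exact ⟨⟨h.1.le, le_refl _⟩, ⟨le_refl _, h.2.le⟩⟩

lemma cut_mem_Icc (hp : IsRectPartition W H P) : ∀ x ∈ cutF P, x ∈ Set.Icc (0:ℝ) W := by
  intro x hx
  simp [cutF] at hx
  rcases hx with ⟨i, rfl⟩ | ⟨i, rfl⟩
  · exact (carrier_subset hp i (corner_mem hp i)).1
  · exact (carrier_subset hp i (corner_mem' hp i)).1

lemma zero_mem_cutF (hp : IsRectPartition W H P) (hW : 0 < W) (hH : 0 < H) :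
    (0:ℝ) ∈ cutF P := by
  have hmem : ((0:ℝ), H/2) ∈ Set.Icc (0:ℝ) W ×ˢ Set.Icc (0:ℝ) H := by
    constructor
    · exact ⟨le_refl _, hW.le⟩
    · constructor <;> simp <;> linarith
  rw [← hp.2.2] at hmem
  obtain ⟨s, ⟨i, rfl⟩, hs⟩ := hmem
  have h1 : (P i).x1 ≤ 0 := hs.1.1
  have h2 : 0 ≤ (P i).x1 := (carrier_subset hp i (corner_mem hp i)).1.1
  have : (P i).x1 = 0 := le_antisymm h1 h2
  rw [← this]; exact x1_mem_cutF P i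

lemma W_mem_cutF (hp : IsRectPartition W H P) (hW : 0 < W) (hH : 0 < H) :
    W ∈ cutF P := by
  have hmem : (W, H/2) ∈ Set.Icc (0:ℝ) W ×ˢ Set.Icc (0:ℝ) H := by
    constructor
    · exact ⟨hW.le, le_refl _⟩
    · constructor <;> simp <;> linarith
  rw [← hp.2.2] at hmem
  obtain ⟨s, ⟨i, rfl⟩, hs⟩ := hmem
  have h1 : W ≤ (P i).x2 := hs.1.2
  have h2 : (P i).x2 ≤ W := (carrier_subset hp i (corner_mem' hp i)).1.2
  have : (P i).x2 = W := le_antisymm h2 h1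
  rw [← this]; exact x2_mem_cutF P i

end

end SIRTP

namespace SIRTP

open scoped ENNReal

lemma sum_transport {k : ℕ} {W H W' H' : ℝ} (hW : 0 < W) (hH : 0 < H)
    (hW' : 0 < W') (hH' : 0 < H')
    {P P' : Fin k → Rect} (hp : IsRectPartition W H P) (hp' : IsRectPartition W' H' P')
    (φ : {x // x ∈ cutF P} ≃o {x // x ∈ cutF P'})
    (hφ1 : ∀ i, (φ ⟨(P i).x1, x1_mem_cutF P i⟩ : ℝ) = (P' i).x1)
    (hφ2 : ∀ i, (φ ⟨(P i).x2, x2_mem_cutF P i⟩ : ℝ) = (P' i).x2) :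
    ∑ i, (P' i).width * (P i).height = W' * H := by
  classical
  have h0X : (0:ℝ) ∈ cutF P := zero_mem_cutF hp hW hH
  have hWX : W ∈ cutF P := W_mem_cutF hp hW hH
  have h0X' : (0:ℝ) ∈ cutF P' := zero_mem_cutF hp' hW' hH'
  have hWX' : W' ∈ cutF P' := W_mem_cutF hp' hW' hH'
  set c := (cutF P).card with hc_def
  have hc : 0 < c := Finset.card_pos.mpr ⟨0, h0X⟩
  set e : Fin c ≃o {x // x ∈ cutF P} := (cutF P).orderIsoOfFin rfl with he_def
  have hidx : ∀ t : ℕ, min t (c-1) < c := by intro t; omega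
  set fA : ℕ → ℝ := fun t => (e ⟨min t (c-1), hidx t⟩ : ℝ) with hfA_def
  set fB : ℕ → ℝ := fun t => (φ (e ⟨min t (c-1), hidx t⟩) : ℝ) with hfB_def
  have hfA_mono : Monotone fA := by
    intro a b hab
    exact Subtype.coe_le_coe.mpr (e.monotone (by simp only [Fin.mk_le_mk]; omega))
  have hfB_mono : Monotone fB := by
    intro a b hab
    exact Subtype.coe_le_coe.mpr (φ.monotone (e.monotone (by simp only [Fin.mk_le_mk]; omega)))
  have hfA_strict : ∀ {a b : ℕ}, a < b → b ≤ c - 1 → fA a < fA b := by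
    intro a b hab hb
    exact Subtype.coe_lt_coe.mpr (e.strictMono (by simp only [Fin.mk_lt_mk]; omega))
  have hfA_eq : ∀ (x : ℝ) (hx : x ∈ cutF P),
      fA ((e.symm ⟨x, hx⟩ : Fin c) : ℕ) = x := by
    intro x hx
    have hmk : (⟨min ((e.symm ⟨x, hx⟩ : Fin c) : ℕ) (c-1), hidx _⟩ : Fin c)
        = e.symm ⟨x, hx⟩ := by
      apply Fin.ext
      have := (e.symm ⟨x, hx⟩).isLt
      simp only []
      omega
    simp only [hfA_def, hmk]
    rw [e.apply_symm_apply]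
  have hfB_eq : ∀ (x : ℝ) (hx : x ∈ cutF P),
      fB ((e.symm ⟨x, hx⟩ : Fin c) : ℕ) = (φ ⟨x, hx⟩ : ℝ) := by
    intro x hx
    have hmk : (⟨min ((e.symm ⟨x, hx⟩ : Fin c) : ℕ) (c-1), hidx _⟩ : Fin c)
        = e.symm ⟨x, hx⟩ := by
      apply Fin.ext
      have := (e.symm ⟨x, hx⟩).isLt
      simp only []
      omega
    simp only [hfB_def, hmk]
    rw [e.apply_symm_apply]
  -- endpoints
  have h0A : fA 0 = 0 := by
    have h1 : fA 0 ≤ 0 := by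
      have hle : (⟨min 0 (c-1), hidx 0⟩ : Fin c) ≤ e.symm ⟨0, h0X⟩ := by
        simp only [Fin.mk_le_mk, Fin.le_def]; omega
      have := e.monotone hle
      rw [e.apply_symm_apply] at this
      exact Subtype.coe_le_coe.mpr this
    have h2 : 0 ≤ fA 0 := ((cut_mem_Icc hp) _ (e ⟨min 0 (c-1), hidx 0⟩).2).1
    linarith
  have hWA : fA (c-1) = W := by
    have h1 : W ≤ fA (c-1) := by
      have hle : e.symm ⟨W, hWX⟩ ≤ (⟨min (c-1) (c-1), hidx _⟩ : Fin c) := by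
        have := (e.symm ⟨W, hWX⟩).isLt
        simp only [Fin.le_def]
        omega
      have := e.monotone hle
      rw [e.apply_symm_apply] at this
      exact Subtype.coe_le_coe.mpr this
    have h2 : fA (c-1) ≤ W := ((cut_mem_Icc hp) _ (e ⟨min (c-1) (c-1), hidx _⟩).2).2
    linarith
  have h0B : fB 0 = 0 := by
    have h1 : fB 0 ≤ 0 := by
      have hle : (⟨min 0 (c-1), hidx 0⟩ : Fin c) ≤ e.symm (φ.symm ⟨0, h0X'⟩) := by
        simp only [Fin.le_def]; omega
      have h2 := φ.monotone (e.monotone hle)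
      rw [e.apply_symm_apply, φ.apply_symm_apply] at h2
      exact Subtype.coe_le_coe.mpr h2
    have h2 : 0 ≤ fB 0 := ((cut_mem_Icc hp') _ (φ (e ⟨min 0 (c-1), hidx 0⟩)).2).1
    linarith
  have hWB : fB (c-1) = W' := by
    have h1 : W' ≤ fB (c-1) := by
      have hle : e.symm (φ.symm ⟨W', hWX'⟩) ≤ (⟨min (c-1) (c-1), hidx _⟩ : Fin c) := by
        have := (e.symm (φ.symm ⟨W', hWX'⟩)).isLt
        simp only [Fin.le_def]
        omega
      have h2 := φ.monotone (e.monotone hle)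
      rw [e.apply_symm_apply, φ.apply_symm_apply] at h2
      exact Subtype.coe_le_coe.mpr h2
    have h2 : fB (c-1) ≤ W' := ((cut_mem_Icc hp') _ (φ (e ⟨min (c-1) (c-1), hidx _⟩)).2).2
    linarith
  -- the transport measure
  set μ : Measure ℝ := ∑ t ∈ Finset.range (c-1),
      (ENNReal.ofReal ((fB (t+1) - fB t)/(fA (t+1) - fA t))) •
        (volume.restrict (Set.Ioc (fA t) (fA (t+1)))) with hμ_def
  have hμ_apply : ∀ S : Set ℝ, MeasurableSet S →
      μ S = ∑ t ∈ Finset.range (c-1),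
        ENNReal.ofReal ((fB (t+1) - fB t)/(fA (t+1) - fA t)) *
          volume (S ∩ Set.Ioc (fA t) (fA (t+1))) := by
    intro S hS
    rw [hμ_def, Measure.finset_sum_apply]
    refine Finset.sum_congr rfl fun t ht => ?_
    rw [Measure.smul_apply, Measure.restrict_apply hS, smul_eq_mul]
  have hμ_sing : ∀ x : ℝ, μ {x} = 0 := by
    intro x
    rw [hμ_apply _ (measurableSet_singleton x)]
    refine Finset.sum_eq_zero fun t ht => ?_
    have hz : volume ({x} ∩ Set.Ioc (fA t) (fA (t+1))) = 0 :=
      measure_mono_null Set.inter_subset_left Real.volume_singleton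
    rw [hz, mul_zero]
  have hμ_Ioc : ∀ s u : ℕ, s ≤ u → u ≤ c - 1 →
      μ (Set.Ioc (fA s) (fA u)) = ENNReal.ofReal (fB u - fB s) := by
    intro s u hsu hu
    rw [hμ_apply _ measurableSet_Ioc]
    have hterm : ∀ t ∈ Finset.range (c-1),
        ENNReal.ofReal ((fB (t+1) - fB t)/(fA (t+1) - fA t)) *
          volume (Set.Ioc (fA s) (fA u) ∩ Set.Ioc (fA t) (fA (t+1)))
        = if t ∈ Finset.Ico s u then ENNReal.ofReal (fB (t+1) - fB t) else 0 := by
      intro t ht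
      rw [Finset.mem_range] at ht
      rw [Set.Ioc_inter_Ioc, ← hfA_mono.map_max, ← hfA_mono.map_min, Real.volume_Ioc]
      by_cases hc1 : s ≤ t ∧ t < u
      · have h1 : max s t = t := max_eq_right hc1.1
        have h2 : min u (t+1) = t+1 := min_eq_right (by omega)
        rw [h1, h2, if_pos (Finset.mem_Ico.mpr hc1)]
        have hApos : 0 < fA (t+1) - fA t :=
          sub_pos.mpr (hfA_strict (Nat.lt_succ_self t) (by omega))
        have hBnn : 0 ≤ fB (t+1) - fB t := sub_nonneg.mpr (hfB_mono (Nat.le_succ t))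
        rw [← ENNReal.ofReal_mul (div_nonneg hBnn hApos.le)]
        rw [div_mul_cancel₀ _ (ne_of_gt hApos)]
      · rw [if_neg (fun hmem => hc1 (Finset.mem_Ico.mp hmem))]
        rcases not_and_or.mp hc1 with hlt | hge
        · have h1 : max s t = s := max_eq_left (by omega)
          have h2 : min u (t+1) = t+1 := min_eq_right (by omega)
          rw [h1, h2]
          have hle : fA (t+1) - fA s ≤ 0 := sub_nonpos.mpr (hfA_mono (by omega))
          rw [ENNReal.ofReal_eq_zero.mpr hle, mul_zero]
        · have h1 : max s t = t := max_eq_right (by omega)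
          have h2 : min u (t+1) = u := min_eq_left (by omega)
          rw [h1, h2]
          have hle : fA u - fA t ≤ 0 := sub_nonpos.mpr (hfA_mono (by omega))
          rw [ENNReal.ofReal_eq_zero.mpr hle, mul_zero]
    rw [Finset.sum_congr rfl hterm, Finset.sum_ite_mem]
    have hsub : Finset.range (c-1) ∩ Finset.Ico s u = Finset.Ico s u := by
      apply Finset.inter_eq_right.mpr
      intro t ht
      rw [Finset.mem_Ico] at ht
      rw [Finset.mem_range]
      omega
    rw [hsub,
      ← ENNReal.ofReal_sum_of_nonneg (fun t _ => sub_nonneg.mpr (hfB_mono (Nat.le_succ t)))]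
    congr 1
    rw [Finset.sum_Ico_eq_sub _ hsu, Finset.sum_range_sub, Finset.sum_range_sub]
    ring
  have hμ_Icc : ∀ s u : ℕ, s ≤ u → u ≤ c - 1 →
      μ (Set.Icc (fA s) (fA u)) = ENNReal.ofReal (fB u - fB s) := by
    intro s u hsu hu
    refine le_antisymm ?_ ?_
    · calc μ (Set.Icc (fA s) (fA u)) ≤ μ ({fA s} ∪ Set.Ioc (fA s) (fA u)) := by
            apply measure_mono
            intro x hx
            rcases eq_or_lt_of_le hx.1 with h | h
            · exact Or.inl (by simp [← h])
            · exact Or.inr ⟨h, hx.2⟩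
        _ ≤ μ {fA s} + μ (Set.Ioc (fA s) (fA u)) := measure_union_le _ _
        _ = ENNReal.ofReal (fB u - fB s) := by
            rw [hμ_sing, hμ_Ioc s u hsu hu, zero_add]
    · rw [← hμ_Ioc s u hsu hu]
      exact measure_mono Set.Ioc_subset_Icc_self
  have hμ_deg : ∀ a b : ℝ, b ≤ a → μ (Set.Icc a b) = 0 := by
    intro a b hba
    refine measure_mono_null (fun x hx => ?_) (hμ_sing a)
    have hxa : x = a := le_antisymm (hx.2.trans hba) hx.1
    simp [hxa]
  -- measure of each carrier under the product measure
  have hν_car : ∀ i, (μ.prod volume) ((P i).carrier) =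
      ENNReal.ofReal ((P' i).width) * ENNReal.ofReal ((P i).height) := by
    intro i
    have hx1 := x1_mem_cutF P i
    have hx2 := x2_mem_cutF P i
    set s := ((e.symm ⟨(P i).x1, hx1⟩ : Fin c) : ℕ) with hs_def
    set u := ((e.symm ⟨(P i).x2, hx2⟩ : Fin c) : ℕ) with hu_def
    have hfAs : fA s = (P i).x1 := hfA_eq _ hx1
    have hfAu : fA u = (P i).x2 := hfA_eq _ hx2
    have hfBs : fB s = (P' i).x1 := by rw [hfB_eq _ hx1, hφ1]
    have hfBu : fB u = (P' i).x2 := by rw [hfB_eq _ hx2, hφ2]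
    have hsu : s ≤ u := by
      by_contra hcon
      have hle : fA u ≤ fA s := hfA_mono (by omega)
      rw [hfAs, hfAu] at hle
      exact absurd hle (not_le.mpr (hp.1 i).1)
    have huc : u ≤ c - 1 := by
      have := (e.symm ⟨(P i).x2, hx2⟩).isLt
      omega
    have hcar : (P i).carrier = Set.Icc (fA s) (fA u) ×ˢ Set.Icc (P i).y1 (P i).y2 := by
      rw [hfAs, hfAu]
      rfl
    rw [hcar, Measure.prod_prod, hμ_Icc s u hsu huc, hfBs, hfBu, Real.volume_Icc]
    rfl
  have hν_box : (μ.prod volume) (Set.Icc (0:ℝ) W ×ˢ Set.Icc (0:ℝ) H)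
      = ENNReal.ofReal W' * ENNReal.ofReal H := by
    have hIccW : Set.Icc (0:ℝ) W = Set.Icc (fA 0) (fA (c-1)) := by rw [h0A, hWA]
    rw [Measure.prod_prod, hIccW, hμ_Icc 0 (c-1) (by omega) (le_refl _), h0B, hWB,
      Real.volume_Icc, sub_zero, sub_zero]
  have hdisj : Pairwise (Function.onFun (AEDisjoint (μ.prod volume)) fun i => (P i).carrier) := by
    intro i j hij
    have hinner := hp.2.1 i j hij
    rw [Rect.inner, Rect.inner, Set.prod_inter_prod, Set.Ioo_inter_Ioo,
      Set.Ioo_inter_Ioo] at hinner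
    show (μ.prod volume) ((P i).carrier ∩ (P j).carrier) = 0
    rw [Rect.carrier, Rect.carrier, Set.prod_inter_prod, Set.Icc_inter_Icc,
      Set.Icc_inter_Icc, Measure.prod_prod]
    rcases Set.prod_eq_empty_iff.mp hinner with hx | hy
    · have hle : (P i).x2 ⊓ (P j).x2 ≤ (P i).x1 ⊔ (P j).x1 :=
        not_lt.mp (Set.Ioo_eq_empty_iff.mp hx)
      rw [hμ_deg _ _ hle, zero_mul]
    · have hle : (P i).y2 ⊓ (P j).y2 ≤ (P i).y1 ⊔ (P j).y1 :=
        not_lt.mp (Set.Ioo_eq_empty_iff.mp hy)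
      rw [Real.volume_Icc, ENNReal.ofReal_eq_zero.mpr (sub_nonpos.mpr hle), mul_zero]
  have hmeas : ∀ i, NullMeasurableSet ((P i).carrier) (μ.prod volume) := fun i =>
    (measurableSet_Icc.prod measurableSet_Icc).nullMeasurableSet
  have htotal : (μ.prod volume) (Set.Icc (0:ℝ) W ×ˢ Set.Icc (0:ℝ) H)
      = ∑ i, (μ.prod volume) ((P i).carrier) := by
    rw [← hp.2.2, measure_iUnion₀ hdisj hmeas, tsum_fintype]
  rw [hν_box] at htotal
  have hwpos : ∀ i, (0:ℝ) ≤ (P' i).width := fun i => le_of_lt (sub_pos.mpr (hp'.1 i).1)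
  have hhpos : ∀ i, (0:ℝ) ≤ (P i).height := fun i => le_of_lt (sub_pos.mpr (hp.1 i).2)
  have hsum : ∑ i, (μ.prod volume) ((P i).carrier)
      = ENNReal.ofReal (∑ i, (P' i).width * (P i).height) := by
    rw [ENNReal.ofReal_sum_of_nonneg (fun i _ => mul_nonneg (hwpos i) (hhpos i))]
    refine Finset.sum_congr rfl fun i _ => ?_
    rw [hν_car i, ← ENNReal.ofReal_mul (hwpos i)]
  rw [hsum, ← ENNReal.ofReal_mul hW'.le] at htotal
  exact ((ENNReal.ofReal_eq_ofReal_iff (mul_nonneg hW'.le hH.le)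
    (Finset.sum_nonneg fun i _ => mul_nonneg (hwpos i) (hhpos i))).mp htotal).symm

end SIRTP

namespace SIRTP

lemma build_transport {k : ℕ} (Pa Pb : Fin k → Rect)
    {ca cb : ℕ} (hca : (cutF Pa).card = ca) (hcb : (cutF Pb).card = cb) (hcab : ca = cb)
    (hr1 : ∀ i : Fin k,
      ((((cutF Pa).orderIsoOfFin hca).symm ⟨(Pa i).x1, x1_mem_cutF Pa i⟩ : Fin ca) : ℕ)
      = ((((cutF Pb).orderIsoOfFin hcb).symm ⟨(Pb i).x1, x1_mem_cutF Pb i⟩ : Fin cb) : ℕ))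
    (hr2 : ∀ i : Fin k,
      ((((cutF Pa).orderIsoOfFin hca).symm ⟨(Pa i).x2, x2_mem_cutF Pa i⟩ : Fin ca) : ℕ)
      = ((((cutF Pb).orderIsoOfFin hcb).symm ⟨(Pb i).x2, x2_mem_cutF Pb i⟩ : Fin cb) : ℕ)) :
    ∃ φ : {x // x ∈ cutF Pa} ≃o {x // x ∈ cutF Pb},
      (∀ i, (φ ⟨(Pa i).x1, x1_mem_cutF Pa i⟩ : ℝ) = (Pb i).x1) ∧
      (∀ i, (φ ⟨(Pa i).x2, x2_mem_cutF Pa i⟩ : ℝ) = (Pb i).x2) := by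
  subst hcab
  refine ⟨((cutF Pa).orderIsoOfFin hca).symm.trans ((cutF Pb).orderIsoOfFin hcb), ?_, ?_⟩
  · intro i
    have hf : (((cutF Pa).orderIsoOfFin hca).symm ⟨(Pa i).x1, x1_mem_cutF Pa i⟩ : Fin ca)
        = ((cutF Pb).orderIsoOfFin hcb).symm ⟨(Pb i).x1, x1_mem_cutF Pb i⟩ :=
      Fin.ext (hr1 i)
    show (((cutF Pb).orderIsoOfFin hcb)
      (((cutF Pa).orderIsoOfFin hca).symm ⟨(Pa i).x1, x1_mem_cutF Pa i⟩) : ℝ) = (Pb i).x1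
    rw [hf, OrderIso.apply_symm_apply]
  · intro i
    have hf : (((cutF Pa).orderIsoOfFin hca).symm ⟨(Pa i).x2, x2_mem_cutF Pa i⟩ : Fin ca)
        = ((cutF Pb).orderIsoOfFin hcb).symm ⟨(Pb i).x2, x2_mem_cutF Pb i⟩ :=
      Fin.ext (hr2 i)
    show (((cutF Pb).orderIsoOfFin hcb)
      (((cutF Pa).orderIsoOfFin hca).symm ⟨(Pa i).x2, x2_mem_cutF Pa i⟩) : ℝ) = (Pb i).x2
    rw [hf, OrderIso.apply_symm_apply]

end SIRTP

open SIRTP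

/-- No constant bound: for any `ε > 0` and `m`, some `p < q < (1+ε)p` needs size `> m`. -/
theorem sirtp_no_constant_bound (ε : ℝ) (hε : 0 < ε) (m : ℕ) (hm : 0 < m) :
    ∃ p q : ℕ, 0 < p ∧ p < q ∧ (q : ℝ) < (1 + ε) * (p : ℝ) ∧
      ∀ k : ℕ, StrictPair (p : ℝ) (q : ℝ) k → m < k := by
  classical
  by_contra hcon
  push_neg at hcon
  set N : ℕ := max 2 (⌈1/ε⌉₊ + 1) with hN_def
  have hNprop : ∀ n : ℕ, N ≤ n → 0 < n ∧ ((n:ℝ)+1 < (1+ε) * (n:ℝ)) := by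
    intro n hn
    have h2 : 2 ≤ n := le_trans (le_max_left _ _) hn
    have hceil : ⌈1/ε⌉₊ + 1 ≤ n := le_trans (le_max_right _ _) hn
    have h1e : (1/ε : ℝ) < n := by
      have h3 : (1/ε : ℝ) ≤ (⌈1/ε⌉₊ : ℝ) := Nat.le_ceil _
      have h4 : ((⌈1/ε⌉₊ : ℕ) : ℝ) < (n : ℝ) := by
        exact_mod_cast Nat.lt_of_lt_of_le (Nat.lt_succ_self _) hceil
      linarith
    have h5 : 1 < ε * n := by
      rw [div_lt_iff₀ hε] at h1e
      linarith
    refine ⟨by omega, by linarith⟩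
  have key : ∀ n : {n : ℕ // N ≤ n},
      ∃ k, StrictPair ((n:ℕ) : ℝ) (((n:ℕ)+1 : ℕ) : ℝ) k ∧ k ≤ m := by
    intro n
    have h := hNprop n n.2
    refine hcon (n:ℕ) ((n:ℕ)+1) h.1 (Nat.lt_succ_self _) ?_
    push_cast
    exact h.2
  haveI : Infinite {n : ℕ // N ≤ n} := by
    refine Infinite.of_injective (fun i : ℕ => (⟨N+i, Nat.le_add_right N i⟩ : {n : ℕ // N ≤ n})) ?_
    intro a b h
    have := congrArg Subtype.val h
    simpa using this
  choose K hKsp hKm using key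
  set g : {n : ℕ // N ≤ n} → Fin (m+1) := fun n => ⟨K n, Nat.lt_succ_of_le (hKm n)⟩ with hg_def
  obtain ⟨k0f, hfib⟩ := Finite.exists_infinite_fiber g
  haveI : Infinite ↥(g ⁻¹' {k0f}) := hfib
  set k0 : ℕ := (k0f : ℕ) with hk0_def
  have hK0 : ∀ b : ↥(g ⁻¹' {k0f}), K b.val = k0 := by
    intro b
    have hb : g b.val = k0f := Set.mem_singleton_iff.mp b.2
    have := congrArg Fin.val hb
    simpa [hg_def] using this
  have hsp2 : ∀ b : ↥(g ⁻¹' {k0f}),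
      ∃ (P1 P2 : Fin k0 → Rect) (σ : Equiv.Perm (Fin k0)),
        IsStrictIsoPair ((b.val : ℕ) : ℝ) (((b.val : ℕ)+1 : ℕ) : ℝ)
          (((b.val : ℕ)+1 : ℕ) : ℝ) ((b.val : ℕ) : ℝ) P1 P2 σ := by
    intro b
    have h := hKsp b.val
    rw [hK0 b] at h
    exact h
  choose P1f P2f σf hiso using hsp2
  -- the combinatorial data map
  have hbound1 : ∀ b i, ((((cutF (P1f b)).orderIsoOfFin rfl).symm
      ⟨(P1f b i).x1, x1_mem_cutF _ i⟩ : Fin _) : ℕ) < 2*k0+1 := by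
    intro b i
    have h1 := (((cutF (P1f b)).orderIsoOfFin rfl).symm ⟨(P1f b i).x1, x1_mem_cutF _ i⟩).isLt
    have h2 := cutF_card_le (P1f b)
    omega
  have hbound2 : ∀ b i, ((((cutF (P1f b)).orderIsoOfFin rfl).symm
      ⟨(P1f b i).x2, x2_mem_cutF _ i⟩ : Fin _) : ℕ) < 2*k0+1 := by
    intro b i
    have h1 := (((cutF (P1f b)).orderIsoOfFin rfl).symm ⟨(P1f b i).x2, x2_mem_cutF _ i⟩).isLt
    have h2 := cutF_card_le (P1f b)
    omega
  have hbound3 : ∀ b i, ((((cutF (P2f b)).orderIsoOfFin rfl).symm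
      ⟨(P2f b i).x1, x1_mem_cutF _ i⟩ : Fin _) : ℕ) < 2*k0+1 := by
    intro b i
    have h1 := (((cutF (P2f b)).orderIsoOfFin rfl).symm ⟨(P2f b i).x1, x1_mem_cutF _ i⟩).isLt
    have h2 := cutF_card_le (P2f b)
    omega
  have hbound4 : ∀ b i, ((((cutF (P2f b)).orderIsoOfFin rfl).symm
      ⟨(P2f b i).x2, x2_mem_cutF _ i⟩ : Fin _) : ℕ) < 2*k0+1 := by
    intro b i
    have h1 := (((cutF (P2f b)).orderIsoOfFin rfl).symm ⟨(P2f b i).x2, x2_mem_cutF _ i⟩).isLt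
    have h2 := cutF_card_le (P2f b)
    omega
  have hboundc1 : ∀ b : ↥(g ⁻¹' {k0f}), (cutF (P1f b)).card < 2*k0+1 := by
    intro b; have := cutF_card_le (P1f b); omega
  have hboundc2 : ∀ b : ↥(g ⁻¹' {k0f}), (cutF (P2f b)).card < 2*k0+1 := by
    intro b; have := cutF_card_le (P2f b); omega
  set D : ↥(g ⁻¹' {k0f}) →
      (Equiv.Perm (Fin k0) × (Fin k0 → Fin (2*k0+1) × Fin (2*k0+1)) ×
        (Fin k0 → Fin (2*k0+1) × Fin (2*k0+1)) × Fin (2*k0+1) × Fin (2*k0+1)) :=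
    fun b => (σf b,
      fun i => (⟨_, hbound1 b i⟩, ⟨_, hbound2 b i⟩),
      fun i => (⟨_, hbound3 b i⟩, ⟨_, hbound4 b i⟩),
      ⟨(cutF (P1f b)).card, hboundc1 b⟩, ⟨(cutF (P2f b)).card, hboundc2 b⟩) with hD_def
  obtain ⟨b1, b2, hne, hDeq⟩ := Finite.exists_ne_map_eq_of_infinite D
  simp only [hD_def, Prod.mk.injEq] at hDeq
  obtain ⟨hσ, hr1, hr2, hcc1, hcc2⟩ := hDeq
  have hcards1 : (cutF (P1f b1)).card = (cutF (P1f b2)).card := congrArg Fin.val hcc1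
  have hcards2 : (cutF (P2f b1)).card = (cutF (P2f b2)).card := congrArg Fin.val hcc2
  have hr1x1 : ∀ i : Fin k0,
      ((((cutF (P1f b1)).orderIsoOfFin rfl).symm ⟨(P1f b1 i).x1, x1_mem_cutF _ i⟩ : Fin _) : ℕ)
      = ((((cutF (P1f b2)).orderIsoOfFin rfl).symm ⟨(P1f b2 i).x1, x1_mem_cutF _ i⟩ : Fin _) : ℕ) := by
    intro i
    have := congrFun hr1 i
    rw [Prod.mk.injEq] at this
    exact congrArg Fin.val this.1
  have hr1x2 : ∀ i : Fin k0,
      ((((cutF (P1f b1)).orderIsoOfFin rfl).symm ⟨(P1f b1 i).x2, x2_mem_cutF _ i⟩ : Fin _) : ℕ)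
      = ((((cutF (P1f b2)).orderIsoOfFin rfl).symm ⟨(P1f b2 i).x2, x2_mem_cutF _ i⟩ : Fin _) : ℕ) := by
    intro i
    have := congrFun hr1 i
    rw [Prod.mk.injEq] at this
    exact congrArg Fin.val this.2
  have hr2x1 : ∀ i : Fin k0,
      ((((cutF (P2f b1)).orderIsoOfFin rfl).symm ⟨(P2f b1 i).x1, x1_mem_cutF _ i⟩ : Fin _) : ℕ)
      = ((((cutF (P2f b2)).orderIsoOfFin rfl).symm ⟨(P2f b2 i).x1, x1_mem_cutF _ i⟩ : Fin _) : ℕ) := by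
    intro i
    have := congrFun hr2 i
    rw [Prod.mk.injEq] at this
    exact congrArg Fin.val this.1
  have hr2x2 : ∀ i : Fin k0,
      ((((cutF (P2f b1)).orderIsoOfFin rfl).symm ⟨(P2f b1 i).x2, x2_mem_cutF _ i⟩ : Fin _) : ℕ)
      = ((((cutF (P2f b2)).orderIsoOfFin rfl).symm ⟨(P2f b2 i).x2, x2_mem_cutF _ i⟩ : Fin _) : ℕ) := by
    intro i
    have := congrFun hr2 i
    rw [Prod.mk.injEq] at this
    exact congrArg Fin.val this.2
  obtain ⟨φ1, hφ1a, hφ1b⟩ := SIRTP.build_transport (P1f b1) (P1f b2) rfl rfl hcards1 hr1x1 hr1x2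
  obtain ⟨φ2, hφ2a, hφ2b⟩ := SIRTP.build_transport (P2f b1) (P2f b2) rfl rfl hcards2 hr2x1 hr2x2
  -- positivity
  set n1 : ℕ := (b1.val : ℕ) with hn1_def
  set n2 : ℕ := (b2.val : ℕ) with hn2_def
  have hn1pos : (0:ℝ) < (n1 : ℝ) := by
    have := (hNprop n1 b1.val.2).1
    exact_mod_cast this
  have hn2pos : (0:ℝ) < (n2 : ℝ) := by
    have := (hNprop n2 b2.val.2).1
    exact_mod_cast this
  have hn1pos' : (0:ℝ) < ((n1+1 : ℕ) : ℝ) := by positivity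
  have hn2pos' : (0:ℝ) < ((n2+1 : ℕ) : ℝ) := by positivity
  -- identity (i) for the first partitions
  have hid1 : ∑ i, (P1f b2 i).width * (P1f b1 i).height = ((n2:ℕ) : ℝ) * ((n1+1 : ℕ) : ℝ) :=
    SIRTP.sum_transport hn1pos hn1pos' hn2pos hn2pos'
      (hiso b1).1 (hiso b2).1 φ1 hφ1a hφ1b
  -- identity (ii) for the second partitions
  have hid2 : ∑ i, (P2f b2 i).width * (P2f b1 i).height = ((n2+1 : ℕ) : ℝ) * ((n1:ℕ) : ℝ) :=
    SIRTP.sum_transport hn1pos' hn1pos hn2pos' hn2pos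
      (hiso b1).2.1 (hiso b2).2.1 φ2 hφ2a hφ2b
  -- bridge via σ
  have hbridge : ∑ i, (P2f b2 i).width * (P2f b1 i).height
      = ∑ i, (P1f b2 i).width * (P1f b1 i).height := by
    rw [← Equiv.sum_comp (σf b1) (fun j => (P2f b2 j).width * (P2f b1 j).height)]
    refine Finset.sum_congr rfl fun i _ => ?_
    have h1 : (P1f b1 i).height = (P2f b1 (σf b1 i)).height := ((hiso b1).2.2 i).2
    have h2 : (P1f b2 i).width = (P2f b2 (σf b2 i)).width := ((hiso b2).2.2 i).1
    rw [← h1, hσ] at *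
    rw [← h2]
  have hfinal : ((n2+1 : ℕ) : ℝ) * ((n1:ℕ) : ℝ) = ((n2:ℕ) : ℝ) * ((n1+1 : ℕ) : ℝ) := by
    rw [← hid1, ← hid2, hbridge]
  have hreal : (n2 : ℝ) = (n1 : ℝ) := by
    push_cast at hfinal
    nlinarith [hfinal]
  have hnat : n2 = n1 := by exact_mod_cast hreal
  apply hne
  apply Subtype.ext
  apply Subtype.ext
  exact hnat.symm
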